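/- Assume K has characteristic 0. For every n ≥ 2, the K-vector space of K-linear combinations f of the commutative nonassociative monomials of multidegree (n,1,1) in K(x,y,z) satisfying ε(f) = 0 and ∂_x(f) = ∂_y(f) = ∂_z(f) = 0 has dimension at least W_{n,1,1} − 3n, where W_{n,1,1} is the number of commutative nonassociative monomials of multidegree (n,1,1) in (x,y,z). -/

import Mathlib

namespace Evanescent

universe u v

variable {T : Type u}

/-- The commutativity relation on the free magma on `T`. -/
inductive CommRel (T : Type u) : FreeMagma T → FreeMagma T → Prop
  | comm (a b : FreeMagma T) : CommRel T (a * b) (b * a)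
  | mul_left {a b : FreeMagma T} (c : FreeMagma T) :
      CommRel T a b → CommRel T (a * c) (b * c)
  | mul_right (c : FreeMagma T) {a b : FreeMagma T} :
      CommRel T a b → CommRel T (c * a) (c * b)

/-- The free commutative magma on `T`: the set of commutative nonassociative
monomials (words) in the variables `T`. -/
def FreeCommMagma (T : Type u) : Type u := Quot (CommRel T)

namespace FreeCommMagma

instance : Mul (FreeCommMagma T) :=
  ⟨Quot.map₂ (· * ·) (fun a _ _ h => CommRel.mul_right a h)
    (fun _ _ b h => CommRel.mul_left b h)⟩

/-- The class of a nonassociative word in the free commutative magma. -/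
def mk (w : FreeMagma T) : FreeCommMagma T := Quot.mk (CommRel T) w

/-- The generator of the free commutative magma corresponding to a variable. -/
def of (t : T) : FreeCommMagma T := mk (FreeMagma.of t)

@[simp] lemma mk_mul (a b : FreeMagma T) : mk a * mk b = mk (a * b) := rfl

protected lemma mul_comm (a b : FreeCommMagma T) : a * b = b * a := by
  induction a using Quot.ind
  induction b using Quot.ind
  exact Quot.sound (CommRel.comm _ _)

instance : CommMagma (FreeCommMagma T) := ⟨FreeCommMagma.mul_comm⟩

end FreeCommMagma

section Peirce

variable (R : Type v) [Semiring R] [DecidableEq T]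

/-- The Peirce polynomial of a (noncommutative) nonassociative word, with
coefficients in `R`. -/
noncomputable def peirceAux (i : T) : FreeMagma T → Polynomial R
  | .of j => if j = i then 1 else 0
  | .mul u v => Polynomial.X * (peirceAux i u + peirceAux i v)

@[simp] lemma peirceAux_mul (i : T) (u v : FreeMagma T) :
    peirceAux R i (u * v) = Polynomial.X * (peirceAux R i u + peirceAux R i v) := rfl

@[simp] lemma peirceAux_of (i j : T) :
    peirceAux R i (FreeMagma.of j) = if j = i then 1 else 0 := rfl

/-- The number of occurrences of the variable `i` in a nonassociative word. -/
def countAux (i : T) : FreeMagma T → ℕ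
  | .of j => if j = i then 1 else 0
  | .mul u v => countAux i u + countAux i v

@[simp] lemma countAux_mul (i : T) (u v : FreeMagma T) :
    countAux i (u * v) = countAux i u + countAux i v := rfl

lemma peirceAux_respects (i : T) {a b : FreeMagma T} (h : CommRel T a b) :
    peirceAux R i a = peirceAux R i b := by
  induction h with
  | comm a b => simp [add_comm]
  | mul_left c h ih => simp [ih]
  | mul_right c h ih => simp [ih]

lemma countAux_respects (i : T) {a b : FreeMagma T} (h : CommRel T a b) :
    countAux i a = countAux i b := by
  induction h with
  | comm a b => simp [Nat.add_comm]
  | mul_left c h ih => simp [ih]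
  | mul_right c h ih => simp [ih]

/-- The Peirce polynomial `∂ᵢ(w)` of a commutative nonassociative monomial `w`,
determined by `∂ᵢ(tᵢ) = 1`, `∂ᵢ(tⱼ) = 0` for `j ≠ i`, and
`∂ᵢ(u·v) = X·(∂ᵢ(u) + ∂ᵢ(v))`. -/
noncomputable def FreeCommMagma.peirce (i : T) : FreeCommMagma T → Polynomial R :=
  Quot.lift (peirceAux R i) fun _ _ h => peirceAux_respects R i h

/-- The number of occurrences (degree) of the variable `i` in a commutative
nonassociative monomial. -/
def FreeCommMagma.count (i : T) : FreeCommMagma T → ℕ :=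
  Quot.lift (countAux i) fun _ _ h => countAux_respects i h

end Peirce

/-- Principal powers of an element of a magma: `ppow a n = a^(n+1)`,
i.e. `ppow a 0 = a` and `ppow a (n+1) = a * (ppow a n)`. -/
def ppow {M : Type v} [Mul M] (a : M) : ℕ → M
  | 0 => a
  | n + 1 => a * ppow a n

/-- Iterated left multiplication: `lpow a r g = a^{{r}} g`, i.e. `lpow a 0 g = g` and
`lpow a (r+1) g = a * (lpow a r g)`. -/
def lpow {M : Type v} [Mul M] (a : M) : ℕ → M → M
  | 0, g => g
  | r + 1, g => a * lpow a r g

section Algebra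

variable (K : Type v) [Field K]

/-- A commutative nonassociative monomial, viewed as an element of the free
commutative nonassociative algebra `K(T)` (realized as the magma algebra of the
free commutative magma). -/
noncomputable def mono (w : FreeCommMagma T) : MonoidAlgebra K (FreeCommMagma T) :=
  MonoidAlgebra.single w 1

/-- The augmentation (sum of the coefficients) of an element of the free
commutative nonassociative algebra. -/
noncomputable def aug : MonoidAlgebra K (FreeCommMagma T) →ₗ[K] K :=
  (Finsupp.lsum K fun _ => LinearMap.id).comp
    (MonoidAlgebra.coeffLinearEquiv K).toLinearMap

/-- The Peirce polynomial `∂ᵢ : K(T) → K[X]`, the `K`-linear map determined on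
monomials by `∂ᵢ(tᵢ) = 1`, `∂ᵢ(tⱼ) = 0` for `j ≠ i`, and `∂ᵢ(u·v) = X·(∂ᵢ(u) + ∂ᵢ(v))`. -/
noncomputable def Dp [DecidableEq T] (i : T) :
    MonoidAlgebra K (FreeCommMagma T) →ₗ[K] Polynomial K :=
  (Finsupp.lsum K fun w => LinearMap.toSpanSingleton K (Polynomial K)
    (FreeCommMagma.peirce K i w)) ∘ₗ (MonoidAlgebra.coeffLinearEquiv K).toLinearMap

/-- The free commutative nonassociative algebra is commutative. -/
lemma fca_mul_comm (f g : MonoidAlgebra K (FreeCommMagma T)) : f * g = g * f := by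
  rw [MonoidAlgebra.mul_def, MonoidAlgebra.mul_def, Finsupp.sum_comm]
  refine Finsupp.sum_congr fun a _ => Finsupp.sum_congr fun c _ => ?_
  rw [FreeCommMagma.mul_comm, mul_comm (f.coeff c) (g.coeff a)]

end Algebra

section Subst

variable (K : Type v) [Field K] {A : Type*} [Mul A]

/-- Evaluation of a nonassociative word under a substitution of the variables. -/
def evalAux (ρ : T → A) : FreeMagma T → A
  | .of t => ρ t
  | .mul u v => evalAux ρ u * evalAux ρ v

@[simp] lemma evalAux_mul (ρ : T → A) (u v : FreeMagma T) :
    evalAux ρ (u * v) = evalAux ρ u * evalAux ρ v := rfl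

/-- Evaluation of a commutative nonassociative monomial in a commutative magma
under a substitution of the variables. -/
def FreeCommMagma.eval (hA : ∀ a b : A, a * b = b * a) (ρ : T → A) :
    FreeCommMagma T → A :=
  Quot.lift (evalAux ρ) (by
    intro a b h
    induction h with
    | comm a b => exact hA _ _
    | mul_left c h ih => simp [ih]
    | mul_right c h ih => simp [ih])

/-- The substitution homomorphism `ρ̂ : K(T) → A` extending a substitution
`ρ : T → A` of the variables, for `A` a commutative nonassociative `K`-algebra. -/
noncomputable def subst [AddCommMonoid A] [Module K A]
    (hA : ∀ a b : A, a * b = b * a) (ρ : T → A)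
    (f : MonoidAlgebra K (FreeCommMagma T)) : A :=
  f.coeff.sum fun w c => c • FreeCommMagma.eval hA ρ w

end Subst

/-- The list of the leaves of a nonassociative word (a rooted binary tree with
leaves labeled by the variables), together with their heights. -/
def leaves : FreeMagma T → List (T × ℕ)
  | .of t => [(t, 0)]
  | .mul u v => (leaves u ++ leaves v).map fun p => (p.1, p.2 + 1)

end Evanescent
namespace Evanescent

/-- The subspace of homogeneous Peirce-evanescent identities of type `[n,1,1]` in
`K(x,y,z)` (variables `0`, `1`, `2` of `Fin 3`). -/
noncomputable def homEvan311 (K : Type*) [Field K] (n : ℕ) :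
    Submodule K (MonoidAlgebra K (FreeCommMagma (Fin 3))) :=
  (Submodule.span K (mono K '' {w : FreeCommMagma (Fin 3) |
      FreeCommMagma.count 0 w = n ∧ FreeCommMagma.count 1 w = 1 ∧
      FreeCommMagma.count 2 w = 1}))
    ⊓ LinearMap.ker (aug K) ⊓ LinearMap.ker (Dp K 0)
    ⊓ LinearMap.ker (Dp K 1) ⊓ LinearMap.ker (Dp K 2)

/-- The number `W_{n,1,1}` of commutative nonassociative monomials of multidegree
`(n,1,1)`. -/
noncomputable def Wn11 (n : ℕ) : ℕ :=
  Nat.card {w : FreeCommMagma (Fin 3) //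
    FreeCommMagma.count 0 w = n ∧ FreeCommMagma.count 1 w = 1 ∧
    FreeCommMagma.count 2 w = 1}

end Evanescent


namespace Evanescent

open Polynomial

section WordLemmas

variable {K : Type*} [Field K]

/-- The number of leaves of a nonassociative word. -/
def len {T : Type u} : FreeMagma T → ℕ
  | .of _ => 1
  | .mul u v => len u + len v

@[simp] lemma len_of {T : Type u} (t : T) : len (FreeMagma.of t) = 1 := rfl

@[simp] lemma len_mul {T : Type u} (u v : FreeMagma T) : len (u * v) = len u + len v := rfl

lemma one_le_len {T : Type u} (a : FreeMagma T) : 1 ≤ len a := by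
  induction a with
  | ih1 t => simp [len_of]
  | ih2 u v ihu ihv => simp only [len_mul]; omega

lemma len_eq (a : FreeMagma (Fin 3)) :
    len a = countAux 0 a + countAux 1 a + countAux 2 a := by
  induction a with
  | ih1 t => fin_cases t <;> simp [countAux]
  | ih2 u v ihu ihv => simp only [len_mul, countAux_mul]; omega

lemma peirceAux_coeff_zero (i : Fin 3) (u v : FreeMagma (Fin 3)) :
    (peirceAux K i (u * v)).coeff 0 = 0 := by
  rw [peirceAux_mul, Polynomial.mul_coeff_zero, Polynomial.coeff_X_zero, zero_mul]

lemma peirceAux_coeff_ge (i : Fin 3) (a : FreeMagma (Fin 3)) :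
    ∀ k : ℕ, len a ≤ k → (peirceAux K i a).coeff k = 0 := by
  induction a with
  | ih1 t =>
    intro k hk
    simp only [len_of] at hk
    have hk0 : k ≠ 0 := by omega
    simp only [peirceAux_of]
    split_ifs <;> simp [Polynomial.coeff_one, hk0]
  | ih2 u v ihu ihv =>
    intro k hk
    have hu := one_le_len u
    have hv := one_le_len v
    simp only [len_mul] at hk
    obtain ⟨k', rfl⟩ : ∃ k', k = k' + 1 := ⟨k - 1, by omega⟩
    rw [peirceAux_mul, Polynomial.coeff_X_mul, Polynomial.coeff_add,
      ihu k' (by omega), ihv k' (by omega), add_zero]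

lemma peirceAux_eval_one (i : Fin 3) (a : FreeMagma (Fin 3)) :
    (peirceAux K i a).eval 1 = (countAux i a : K) := by
  induction a with
  | ih1 t =>
    simp only [peirceAux_of, countAux]
    split_ifs <;> simp
  | ih2 u v ihu ihv =>
    simp only [peirceAux_mul, Polynomial.eval_mul, Polynomial.eval_add, Polynomial.eval_X,
      ihu, ihv, countAux_mul]
    push_cast
    ring

lemma peirceAux_eval_half [CharZero K] (a : FreeMagma (Fin 3)) :
    (peirceAux K 0 a).eval 2⁻¹ + (peirceAux K 1 a).eval 2⁻¹
      + (peirceAux K 2 a).eval 2⁻¹ = 1 := by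
  have h2 : (2 : K) ≠ 0 := two_ne_zero
  induction a with
  | ih1 t => fin_cases t <;> simp [Fin.ext_iff]
  | ih2 u v ihu ihv =>
    simp only [peirceAux_mul, Polynomial.eval_mul, Polynomial.eval_add, Polynomial.eval_X]
    have h21 : (2⁻¹ : K) * 2 = 1 := by norm_num
    linear_combination (2⁻¹ : K) * ihu + (2⁻¹ : K) * ihv + h21

lemma finite_len (m : ℕ) : {a : FreeMagma (Fin 3) | len a = m}.Finite := by
  induction m using Nat.strong_induction_on with
  | _ m ih =>
    apply Set.Finite.subset (s := Set.range (FreeMagma.of : Fin 3 → FreeMagma (Fin 3)) ∪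
      ⋃ k ∈ Set.Ico 1 m, (fun p : FreeMagma (Fin 3) × FreeMagma (Fin 3) => p.1 * p.2) ''
        ({a | len a = k} ×ˢ {a | len a = m - k}))
    · refine (Set.finite_range _).union (Set.Finite.biUnion (Set.finite_Ico 1 m) ?_)
      intro k hk
      simp only [Set.mem_Ico] at hk
      exact ((ih k hk.2).prod (ih (m - k) (by omega))).image _
    · intro a ha
      cases a with
      | of t => exact Or.inl ⟨t, rfl⟩
      | mul u v =>
        refine Or.inr ?_
        have hu := one_le_len u
        have hv := one_le_len v
        have ha' : len u + len v = m := ha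
        refine Set.mem_biUnion (show len u ∈ Set.Ico 1 m by
          simp only [Set.mem_Ico]; omega) ?_
        exact ⟨(u, v), ⟨rfl, show len v = m - len u by omega⟩, rfl⟩

end WordLemmas

section AlgLemmas

variable {K : Type*} [Field K]

lemma aug_mono (w : FreeCommMagma (Fin 3)) : aug K (mono K w) = 1 := by
  rw [aug, mono]
  exact Finsupp.lsum_single K (fun _ => LinearMap.id) w 1

lemma Dp_mono (i : Fin 3) (w : FreeCommMagma (Fin 3)) :
    Dp K i (mono K w) = FreeCommMagma.peirce K i w := by
  rw [Dp, mono]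
  change (Finsupp.lsum K fun w => LinearMap.toSpanSingleton K (Polynomial K)
    (FreeCommMagma.peirce K i w)) (Finsupp.single w 1) = _
  rw [Finsupp.lsum_single]
  rw [LinearMap.toSpanSingleton_apply, one_smul]

lemma mono_injective : Function.Injective (fun w : FreeCommMagma (Fin 3) => mono K w) := by
  intro w₁ w₂ h
  exact MonoidAlgebra.single_left_injective one_ne_zero h

lemma linearIndependent_mono :
    LinearIndependent K (fun w : FreeCommMagma (Fin 3) => mono K w) := by
  have h := (MonoidAlgebra.basis (FreeCommMagma (Fin 3)) K).linearIndependent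
  exact h

end AlgLemmas

end Evanescent

open Evanescent Polynomial in
/-- Over a field of characteristic zero, for `n ≥ 2` the space of
homogeneous Peirce-evanescent identities of type `[n,1,1]` has dimension at least
`W_{n,1,1} − 3n`. -/
theorem homogeneous_evanescent_multidegree_n_one_one
    {K : Type*} [Field K] [CharZero K] :
    ∀ n : ℕ, 2 ≤ n →
      (Wn11 n : ℤ) - 3 * n ≤ (Module.finrank K (homEvan311 K n) : ℤ) := by
  intro n hn
  classical
  let S : Set (FreeCommMagma (Fin 3)) := {w : FreeCommMagma (Fin 3) |
      FreeCommMagma.count 0 w = n ∧ FreeCommMagma.count 1 w = 1 ∧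
      FreeCommMagma.count 2 w = 1}
  -- every element of S comes from a word of length n+2
  have hword : ∀ w ∈ S, ∃ a : FreeMagma (Fin 3), w = FreeCommMagma.mk a ∧ len a = n + 2 ∧
      countAux 0 a = n ∧ countAux 1 a = 1 ∧ countAux 2 a = 1 ∧
      (∀ i : Fin 3, (peirceAux K i a).coeff 0 = 0) := by
    intro w hw
    obtain ⟨a, ha⟩ := Quot.exists_rep w
    obtain ⟨h0, h1, h2⟩ := hw
    have e0 : countAux 0 a = n := by rw [← ha] at h0; exact h0
    have e1 : countAux 1 a = 1 := by rw [← ha] at h1; exact h1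
    have e2 : countAux 2 a = 1 := by rw [← ha] at h2; exact h2
    have hlen : len a = n + 2 := by rw [len_eq, e0, e1, e2]
    refine ⟨a, ha.symm, hlen, e0, e1, e2, ?_⟩
    intro i
    cases a with
    | of t =>
      exfalso
      rw [len_of] at hlen
      omega
    | mul u v => exact peirceAux_coeff_zero i u v
  -- finiteness of S
  have hSfin : S.Finite := by
    apply Set.Finite.subset ((finite_len (n + 2)).image FreeCommMagma.mk)
    intro w hw
    obtain ⟨a, ha, hlen, -, -, -, -⟩ := hword w hw
    exact ⟨a, hlen, ha.symm⟩
  let V : Submodule K (MonoidAlgebra K (FreeCommMagma (Fin 3))) :=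
    Submodule.span K (mono K '' S)
  haveI hVfd : FiniteDimensional K V := FiniteDimensional.span_of_finite K (hSfin.image _)
  -- finrank V = Wn11 n
  haveI : Fintype ↑(mono K '' S) := (hSfin.image _).fintype
  have hli0 : LinearIndependent K (fun w : S => mono K (w : FreeCommMagma (Fin 3))) :=
    linearIndependent_mono.comp _ Subtype.coe_injective
  have hli : LinearIndependent K ((↑) : ↑(mono K '' S) → MonoidAlgebra K (FreeCommMagma (Fin 3))) :=
    LinearIndepOn.id_image (R := K) (v := fun w => mono K w) (s := S) hli0
  have hWn : Wn11 n = S.ncard := by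
    rw [Wn11]
    exact Nat.card_coe_set_eq S
  have hrankV : Module.finrank K V = Wn11 n := by
    have h1 : Module.finrank K V = (mono K '' S).toFinset.card :=
      finrank_span_set_eq_card hli
    rw [h1, ← Set.ncard_eq_toFinset_card', Set.ncard_image_of_injective S mono_injective, hWn]
  -- the key functional principle
  have key : ∀ (φ : MonoidAlgebra K (FreeCommMagma (Fin 3)) →ₗ[K] K),
      (∀ w ∈ S, φ (mono K w) = 0) → ∀ f ∈ V, φ f = 0 := by
    intro φ hφ f hf
    have hle : V ≤ LinearMap.ker φ := by
      refine Submodule.span_le.mpr ?_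
      rintro _ ⟨w, hw, rfl⟩
      exact hφ w hw
    exact hle hf
  -- the coordinate map
  let L : MonoidAlgebra K (FreeCommMagma (Fin 3)) →ₗ[K]
      (Fin n → K) × (Fin n → K) × (Fin n → K) :=
    LinearMap.prod (LinearMap.pi fun k : Fin n => (Polynomial.lcoeff K ((k : ℕ) + 1)).comp (Dp K 0))
      (LinearMap.prod
        (LinearMap.pi fun k : Fin n => (Polynomial.lcoeff K ((k : ℕ) + 2)).comp (Dp K 1))
        (LinearMap.pi fun k : Fin n => (Polynomial.lcoeff K ((k : ℕ) + 2)).comp (Dp K 2)))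
  let L' : V →ₗ[K] (Fin n → K) × (Fin n → K) × (Fin n → K) := L.comp V.subtype
  -- main inclusion
  have hmain : Submodule.map V.subtype (LinearMap.ker L') ≤ homEvan311 K n := by
    rintro _ ⟨g, hg, rfl⟩
    have hgz : L' g = 0 := hg
    have hfV : V.subtype g ∈ V := g.2
    have hg0 : ∀ k : Fin n, (Dp K 0 (V.subtype g)).coeff ((k : ℕ) + 1) = 0 :=
      fun k => congrFun (congrArg Prod.fst hgz) k
    have hg1 : ∀ k : Fin n, (Dp K 1 (V.subtype g)).coeff ((k : ℕ) + 2) = 0 :=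
      fun k => congrFun (congrArg (fun p => p.2.1) hgz) k
    have hg2 : ∀ k : Fin n, (Dp K 2 (V.subtype g)).coeff ((k : ℕ) + 2) = 0 :=
      fun k => congrFun (congrArg (fun p => p.2.2) hgz) k
    have hcoeff0 : ∀ i : Fin 3, (Dp K i (V.subtype g)).coeff 0 = 0 := by
      intro i
      refine key ((Polynomial.lcoeff K 0).comp (Dp K i)) ?_ _ hfV
      intro w hw
      obtain ⟨a, rfl, hlen, e0, e1, e2, hcz⟩ := hword w hw
      show (Polynomial.lcoeff K 0) (Dp K i (mono K (FreeCommMagma.mk a))) = 0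
      rw [Dp_mono]
      exact hcz i
    have hhigh : ∀ i : Fin 3, ∀ k : ℕ, n + 2 ≤ k → (Dp K i (V.subtype g)).coeff k = 0 := by
      intro i k hk
      refine key ((Polynomial.lcoeff K k).comp (Dp K i)) ?_ _ hfV
      intro w hw
      obtain ⟨a, rfl, hlen, -, -, -, -⟩ := hword w hw
      show (Polynomial.lcoeff K k) (Dp K i (mono K (FreeCommMagma.mk a))) = 0
      rw [Dp_mono]
      exact peirceAux_coeff_ge i a k (by omega)
    have hev1y : (Dp K 1 (V.subtype g)).eval 1 = aug K (V.subtype g) := by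
      have h : (((Polynomial.leval (1 : K)).comp (Dp K 1) - aug K : MonoidAlgebra K (FreeCommMagma (Fin 3)) →ₗ[K] K)) (V.subtype g) = 0 := by
        refine key _ ?_ _ hfV
        intro w hw
        obtain ⟨a, rfl, hlen, e0, e1, e2, -⟩ := hword w hw
        simp only [LinearMap.sub_apply, LinearMap.comp_apply, Dp_mono, aug_mono,
          Polynomial.leval_apply]
        show Polynomial.eval 1 (peirceAux K 1 a) - 1 = 0
        rw [peirceAux_eval_one, e1]
        simp
      simpa [sub_eq_zero, Polynomial.leval_apply] using h
    have hev1z : (Dp K 2 (V.subtype g)).eval 1 = aug K (V.subtype g) := by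
      have h : (((Polynomial.leval (1 : K)).comp (Dp K 2) - aug K : MonoidAlgebra K (FreeCommMagma (Fin 3)) →ₗ[K] K)) (V.subtype g) = 0 := by
        refine key _ ?_ _ hfV
        intro w hw
        obtain ⟨a, rfl, hlen, e0, e1, e2, -⟩ := hword w hw
        simp only [LinearMap.sub_apply, LinearMap.comp_apply, Dp_mono, aug_mono,
          Polynomial.leval_apply]
        show Polynomial.eval 1 (peirceAux K 2 a) - 1 = 0
        rw [peirceAux_eval_one, e2]
        simp
      simpa [sub_eq_zero, Polynomial.leval_apply] using h
    have hev1x : (Dp K 0 (V.subtype g)).eval 1 = (n : K) * aug K (V.subtype g) := by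
      have h : (((Polynomial.leval (1 : K)).comp (Dp K 0) - (n : K) • aug K : MonoidAlgebra K (FreeCommMagma (Fin 3)) →ₗ[K] K)) (V.subtype g) = 0 := by
        refine key _ ?_ _ hfV
        intro w hw
        obtain ⟨a, rfl, hlen, e0, e1, e2, -⟩ := hword w hw
        simp only [LinearMap.sub_apply, LinearMap.comp_apply, LinearMap.smul_apply, Dp_mono,
          aug_mono, Polynomial.leval_apply, smul_eq_mul, mul_one]
        show Polynomial.eval 1 (peirceAux K 0 a) - (n : K) = 0
        rw [peirceAux_eval_one, e0]
        simp
      simpa [sub_eq_zero, Polynomial.leval_apply, smul_eq_mul] using h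
    have hevh : (Dp K 0 (V.subtype g)).eval 2⁻¹ + (Dp K 1 (V.subtype g)).eval 2⁻¹
        + (Dp K 2 (V.subtype g)).eval 2⁻¹ = aug K (V.subtype g) := by
      have h : (((Polynomial.leval (2⁻¹ : K)).comp (Dp K 0 + Dp K 1 + Dp K 2) - aug K :
          MonoidAlgebra K (FreeCommMagma (Fin 3)) →ₗ[K] K)) (V.subtype g) = 0 := by
        refine key _ ?_ _ hfV
        intro w hw
        obtain ⟨a, rfl, hlen, e0, e1, e2, -⟩ := hword w hw
        simp only [LinearMap.sub_apply, LinearMap.comp_apply, LinearMap.add_apply, Dp_mono,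
          aug_mono, Polynomial.leval_apply, Polynomial.eval_add]
        show Polynomial.eval 2⁻¹ (peirceAux K 0 a) + Polynomial.eval 2⁻¹ (peirceAux K 1 a)
          + Polynomial.eval 2⁻¹ (peirceAux K 2 a) - 1 = 0
        rw [peirceAux_eval_half]
        simp
      have h' := sub_eq_zero.mp (by
        simpa [Polynomial.leval_apply, Polynomial.eval_add] using h)
      exact h'
    -- polynomial structure
    have hp1 : Dp K 1 (V.subtype g)
        = Polynomial.C ((Dp K 1 (V.subtype g)).coeff 1) * Polynomial.X := by
      ext k
      rw [Polynomial.coeff_C_mul, Polynomial.coeff_X]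
      rcases eq_or_ne k 1 with rfl | hk
      · simp
      · rw [if_neg fun h => hk h.symm, mul_zero]
        rcases Nat.lt_or_ge k 2 with h2 | h2
        · have hk0 : k = 0 := by omega
          subst hk0
          exact hcoeff0 1
        · obtain ⟨m, rfl⟩ : ∃ m, k = m + 2 := ⟨k - 2, by omega⟩
          rcases Nat.lt_or_ge m n with hm | hm
          · exact hg1 ⟨m, hm⟩
          · exact hhigh 1 (m + 2) (by omega)
    have hp2 : Dp K 2 (V.subtype g)
        = Polynomial.C ((Dp K 2 (V.subtype g)).coeff 1) * Polynomial.X := by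
      ext k
      rw [Polynomial.coeff_C_mul, Polynomial.coeff_X]
      rcases eq_or_ne k 1 with rfl | hk
      · simp
      · rw [if_neg fun h => hk h.symm, mul_zero]
        rcases Nat.lt_or_ge k 2 with h2 | h2
        · have hk0 : k = 0 := by omega
          subst hk0
          exact hcoeff0 2
        · obtain ⟨m, rfl⟩ : ∃ m, k = m + 2 := ⟨k - 2, by omega⟩
          rcases Nat.lt_or_ge m n with hm | hm
          · exact hg2 ⟨m, hm⟩
          · exact hhigh 2 (m + 2) (by omega)
    have hp0 : Dp K 0 (V.subtype g)
        = Polynomial.C ((Dp K 0 (V.subtype g)).coeff (n + 1)) * Polynomial.X ^ (n + 1) := by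
      ext k
      rw [Polynomial.coeff_C_mul, Polynomial.coeff_X_pow]
      rcases eq_or_ne k (n + 1) with rfl | hk
      · simp
      · rw [if_neg hk, mul_zero]
        rcases Nat.eq_zero_or_pos k with rfl | hkpos
        · exact hcoeff0 0
        · rcases Nat.lt_or_ge k (n + 1) with h | h
          · obtain ⟨m, rfl⟩ : ∃ m, k = m + 1 := ⟨k - 1, by omega⟩
            exact hg0 ⟨m, by omega⟩
          · exact hhigh 0 k (by omega)
    -- determine the coefficients
    have hc1 : (Dp K 1 (V.subtype g)).coeff 1 = aug K (V.subtype g) := by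
      have h := hev1y
      rw [hp1] at h
      simpa using h
    have hc2 : (Dp K 2 (V.subtype g)).coeff 1 = aug K (V.subtype g) := by
      have h := hev1z
      rw [hp2] at h
      simpa using h
    have hc0 : (Dp K 0 (V.subtype g)).coeff (n + 1) = (n : K) * aug K (V.subtype g) := by
      have h := hev1x
      rw [hp0] at h
      simpa using h
    have hsum := hevh
    rw [hp0, hp1, hp2, hc0, hc1, hc2] at hsum
    simp only [Polynomial.eval_mul, Polynomial.eval_C, Polynomial.eval_X,
      Polynomial.eval_pow] at hsum
    have h2 : (2 : K) ≠ 0 := two_ne_zero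
    have h21 : (2⁻¹ : K) * 2 = 1 := by norm_num
    have hkey : (n : K) * aug K (V.subtype g) * (2⁻¹ : K) ^ (n + 1) = 0 := by
      linear_combination hsum - aug K (V.subtype g) * h21
    have hnK : (n : K) ≠ 0 := Nat.cast_ne_zero.mpr (by omega)
    have hiK : (2⁻¹ : K) ^ (n + 1) ≠ 0 := pow_ne_zero _ (inv_ne_zero h2)
    have haug : aug K (V.subtype g) = 0 := by
      rcases mul_eq_zero.mp hkey with h | h
      · rcases mul_eq_zero.mp h with h' | h'
        · exact absurd h' hnK
        · exact h'
      · exact absurd h hiK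
    have hD1 : Dp K 1 (V.subtype g) = 0 := by rw [hp1, hc1, haug]; simp
    have hD2 : Dp K 2 (V.subtype g) = 0 := by rw [hp2, hc2, haug]; simp
    have hD0 : Dp K 0 (V.subtype g) = 0 := by rw [hp0, hc0, haug]; simp
    show V.subtype g ∈ homEvan311 K n
    simp only [homEvan311, Submodule.mem_inf, LinearMap.mem_ker]
    exact ⟨⟨⟨⟨hfV, haug⟩, hD0⟩, hD1⟩, hD2⟩
  -- dimension count
  haveI hEfd : FiniteDimensional K (homEvan311 K n) := by
    refine Submodule.finiteDimensional_of_le (S₂ := V) ?_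
    intro f hf
    simp only [homEvan311, Submodule.mem_inf] at hf
    exact hf.1.1.1.1
  have hrn := LinearMap.finrank_range_add_finrank_ker L'
  have hR : Module.finrank K (LinearMap.range L') ≤ 3 * n := by
    have hτ : Module.finrank K ((Fin n → K) × (Fin n → K) × (Fin n → K)) = 3 * n := by
      simp only [Module.finrank_prod, Module.finrank_pi, Fintype.card_fin]
      ring
    exact le_trans (Submodule.finrank_le _) (le_of_eq hτ)
  have hker : Module.finrank K (LinearMap.ker L')
      = Module.finrank K (Submodule.map V.subtype (LinearMap.ker L')) :=
    (Submodule.equivMapOfInjective V.subtype (Submodule.injective_subtype V) _).finrank_eq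
  have hle2 : Module.finrank K (Submodule.map V.subtype (LinearMap.ker L'))
      ≤ Module.finrank K (homEvan311 K n) :=
    Submodule.finrank_mono hmain
  have hfinal : Wn11 n ≤ 3 * n + Module.finrank K (homEvan311 K n) := by
    rw [← hrankV, ← hrn]
    omega
  omega
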